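/- (Generalized Markov–Kakutani for a semidirect product of two abelian semigroups) Let K be a nonempty convex compact subset of a Hausdorff locally convex topological vector space. Let H and G be abelian semigroups of continuous affine self-maps of K, both containing the identity, such that for every h ∈ H and g ∈ G there exists h′ ∈ H with h ∘ g = g ∘ h′. Then there exists p ∈ K with h(p) = p and g(p) = p for all h ∈ H and g ∈ G; in particular every map of the form h ∘ g fixes p. -/

import Mathlib

def AffOn {X : Type*} [AddCommGroup X] [Module ℝ X] (K : Set X) (f : K → K) : Prop :=
  ∀ (x y : K) (t : ℝ), 0 ≤ t → t ≤ 1 →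
    ∀ h : t • (x : X) + (1 - t) • (y : X) ∈ K,
      (f ⟨_, h⟩ : X) = t • (f x : X) + (1 - t) • (f y : X)

/-- Convexity for a subset of the subtype `K`. -/
def ConvK {X : Type*} [AddCommGroup X] [Module ℝ X] (K : Set X) (C : Set K) : Prop :=
  ∀ x ∈ C, ∀ y ∈ C, ∀ t : ℝ, 0 ≤ t → t ≤ 1 →
    ∀ h : t • (x : X) + (1 - t) • (y : X) ∈ K, (⟨_, h⟩ : K) ∈ C

section Aux

variable {X : Type*} [AddCommGroup X] [Module ℝ X]

lemma avg_mem_spec {K : Set X} (hconv : Convex ℝ K) {f : K → K} (haff : AffOn K f)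
    {C : Set K} (hC : ConvK K C) {z : ℕ → K} (hz : ∀ k, z k ∈ C) :
    ∀ n : ℕ, ∃ b : K, b ∈ C ∧
      (b : X) = ((n : ℝ) + 1)⁻¹ • ∑ k ∈ Finset.range (n + 1), (z k : X) ∧
      (f b : X) = ((n : ℝ) + 1)⁻¹ • ∑ k ∈ Finset.range (n + 1), (f (z k) : X) := by
  intro n
  induction n with
  | zero =>
    exact ⟨z 0, hz 0, by simp, by simp⟩
  | succ n ih =>
    obtain ⟨b, hbC, hb1, hb2⟩ := ih
    set t : ℝ := ((n : ℝ) + 1) / ((n : ℝ) + 2) with ht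
    have hn2 : (0 : ℝ) < (n : ℝ) + 2 := by positivity
    have ht0 : 0 ≤ t := by positivity
    have ht1 : t ≤ 1 := by
      rw [ht, div_le_one hn2]; linarith
    have hK : t • (b : X) + (1 - t) • ((z (n + 1) : K) : X) ∈ K :=
      hconv b.2 (z (n + 1)).2 ht0 (by linarith) (by ring)
    have h1 : t * ((n : ℝ) + 1)⁻¹ = ((n : ℝ) + 2)⁻¹ := by
      rw [ht]; field_simp
    have h2 : 1 - t = ((n : ℝ) + 2)⁻¹ := by
      rw [ht]; field_simp; ring
    have key : ∀ S u : X, t • (((n : ℝ) + 1)⁻¹ • S) + (1 - t) • u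
        = ((n : ℝ) + 2)⁻¹ • (S + u) := by
      intro S u
      rw [smul_smul, h1, h2, smul_add]
    have hcast : ((n + 1 : ℕ) : ℝ) + 1 = (n : ℝ) + 2 := by push_cast; ring
    refine ⟨⟨_, hK⟩, hC b hbC (z (n + 1)) (hz _) t ht0 ht1 hK, ?_, ?_⟩
    · show t • (b : X) + (1 - t) • ((z (n + 1) : K) : X) = _
      rw [hb1, key, hcast, ← Finset.sum_range_succ]
    · rw [haff b (z (n + 1)) t ht0 ht1 hK, hb2, key, hcast, ← Finset.sum_range_succ]

variable [TopologicalSpace X] [IsTopologicalAddGroup X] [ContinuousSMul ℝ X] [T2Space X]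
  [LocallyConvexSpace ℝ X]

lemma fix_one {K : Set X} (hconv : Convex ℝ K) (hcomp : IsCompact K)
    {f : K → K} (hf : Continuous f) (haff : AffOn K f)
    {C : Set K} (hCne : C.Nonempty) (hCcl : IsClosed C) (hCc : ConvK K C)
    (hinv : ∀ x ∈ C, f x ∈ C) : ∃ p ∈ C, f p = p := by
  haveI : CompactSpace K := isCompact_iff_compactSpace.mp hcomp
  obtain ⟨x₀, hx₀⟩ := hCne
  set z : ℕ → K := fun k => f^[k] x₀ with hzdef
  have hzsucc : ∀ k, z (k + 1) = f (z k) := by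
    intro k; simp only [hzdef]; rw [Function.iterate_succ_apply']
  have hz : ∀ k, z k ∈ C := by
    intro k
    induction k with
    | zero => simpa [hzdef] using hx₀
    | succ k ih => rw [hzsucc]; exact hinv _ ih
  choose b hbC hb1 hb2 using avg_mem_spec hconv haff hCc hz
  have hmap : Filter.map b Filter.atTop ≤ Filter.principal C :=
    Filter.tendsto_principal.mpr (Filter.Eventually.of_forall hbC)
  obtain ⟨p, hpC, hp⟩ := (hCcl.isCompact).exists_clusterPt hmap
  refine ⟨p, hpC, ?_⟩
  by_contra hne'
  have hxy : (f p : X) ≠ (p : X) := fun h => hne' (Subtype.ext h)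
  obtain ⟨φ, hφ⟩ := geometric_hahn_banach_point_point hxy
  set g : K → ℝ := fun x => φ (f x : X) - φ (x : X) with hgdef
  have hgc : Continuous g :=
    ((φ.continuous.comp continuous_subtype_val).comp hf).sub
      (φ.continuous.comp continuous_subtype_val)
  have hclg : ClusterPt (g p) (Filter.map g (Filter.map b Filter.atTop)) :=
    hp.map hgc.continuousAt Filter.tendsto_map
  have hg : ∀ n, g (b n) = ((n : ℝ) + 1)⁻¹ * (φ (z (n + 1) : X) - φ (z 0 : X)) := by
    intro n
    have e1 : φ ((b n : K) : X) = ((n : ℝ) + 1)⁻¹ * ∑ k ∈ Finset.range (n + 1), φ (z k : X) := by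
      rw [hb1 n, map_smul, map_sum]; rfl
    have e2 : φ ((f (b n) : K) : X)
        = ((n : ℝ) + 1)⁻¹ * ∑ k ∈ Finset.range (n + 1), φ (z (k + 1) : X) := by
      rw [hb2 n, map_smul, map_sum]
      simp only [smul_eq_mul]
      congr 1
      exact Finset.sum_congr rfl fun k _ => by rw [← hzsucc]
    have : g (b n) = ((n : ℝ) + 1)⁻¹ *
        ∑ k ∈ Finset.range (n + 1), (φ (z (k + 1) : X) - φ (z k : X)) := by
      rw [hgdef]
      simp only
      rw [e1, e2, Finset.sum_sub_distrib, mul_sub]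
    rw [this, Finset.sum_range_sub (fun k => φ (z k : X))]
  obtain ⟨M, hM⟩ := hcomp.exists_bound_of_continuousOn φ.continuous.continuousOn
  have htend : Filter.Tendsto (g ∘ b) Filter.atTop (nhds 0) := by
    apply squeeze_zero_norm (a := fun n : ℕ => (1 / ((n : ℝ) + 1)) * (2 * M))
    · intro n
      simp only [Function.comp_apply, hg n, norm_mul, Real.norm_eq_abs]
      rw [one_div]
      have h1 : |((n : ℝ) + 1)⁻¹| = ((n : ℝ) + 1)⁻¹ := abs_of_nonneg (by positivity)
      rw [h1]
      have hMz : ‖φ (z (n+1) : X)‖ ≤ M := hM _ (z (n+1)).2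
      have hMz0 : ‖φ (z 0 : X)‖ ≤ M := hM _ (z 0).2
      have : |φ (z (n + 1) : X) - φ (z 0 : X)| ≤ 2 * M := by
        rw [Real.norm_eq_abs] at hMz hMz0
        calc |φ (z (n+1) : X) - φ (z 0 : X)|
            ≤ |φ (z (n+1) : X)| + |φ (z 0 : X)| := abs_sub _ _
          _ ≤ 2 * M := by linarith
      exact mul_le_mul_of_nonneg_left this (by positivity)
    · have := tendsto_one_div_add_atTop_nhds_zero_nat.mul_const (2 * M)
      simpa using this
  have hgp : g p = 0 := by
    have h1 : Filter.map g (Filter.map b Filter.atTop) ≤ nhds 0 := by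
      rw [Filter.map_map]; exact htend
    exact eq_of_nhds_neBot (hclg.mono h1)
  have : φ (f p : X) - φ (p : X) = 0 := hgp
  linarith

lemma common_fix {K : Set X} (hconv : Convex ℝ K) (hcomp : IsCompact K)
    {C₀ : Set K} (hne : C₀.Nonempty) (hcl : IsClosed C₀) (hcc : ConvK K C₀)
    {S : Set (K → K)} (hS : ∀ f ∈ S, Continuous f ∧ AffOn K f)
    (habel : ∀ f ∈ S, ∀ g ∈ S, f ∘ g = g ∘ f)
    (hinv : ∀ f ∈ S, ∀ x ∈ C₀, f x ∈ C₀) :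
    ∃ p ∈ C₀, ∀ f ∈ S, f p = p := by
  haveI : CompactSpace K := isCompact_iff_compactSpace.mp hcomp
  set D : Set (K → K) → Set K := fun T => C₀ ∩ {x | ∀ f ∈ T, f x = x} with hD
  have hDcl : ∀ T : Set (K → K), T ⊆ S → IsClosed (D T) := by
    intro T hT
    refine hcl.inter ?_
    have : {x : K | ∀ f ∈ T, f x = x} = ⋂ f ∈ T, {x | f x = x} := by
      ext x; simp
    rw [this]
    exact isClosed_biInter fun f hf => isClosed_eq (hS f (hT hf)).1 continuous_id
  have hDconv : ∀ T : Set (K → K), T ⊆ S → ConvK K (D T) := by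
    intro T hT x hx y hy t ht0 ht1 h
    refine ⟨hcc x hx.1 y hy.1 t ht0 ht1 h, fun f hf => ?_⟩
    apply Subtype.ext
    rw [(hS f (hT hf)).2 x y t ht0 ht1 h]
    rw [show (f x : X) = (x : X) from congrArg _ (hx.2 f hf),
      show (f y : X) = (y : X) from congrArg _ (hy.2 f hf)]
  have key : ∀ T : Set (K → K), T.Finite → T ⊆ S → (D T).Nonempty := by
    intro T hTfin
    refine Set.Finite.induction_on (motive := fun T _ => T ⊆ S → (D T).Nonempty) T hTfin ?_ ?_
    · intro _
      obtain ⟨x, hx⟩ := hne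
      exact ⟨x, hx, fun f hf => absurd hf (Set.notMem_empty f)⟩
    · intro f T hfT hTfin ih hins
      have hfS : f ∈ S := hins (Set.mem_insert f T)
      have hTS : T ⊆ S := fun g hg => hins (Set.mem_insert_of_mem f hg)
      have hDTne := ih hTS
      have hDTinv : ∀ x ∈ D T, f x ∈ D T := by
        intro x hx
        refine ⟨hinv f hfS x hx.1, fun g hg => ?_⟩
        have hcomm : g ∘ f = f ∘ g := habel g (hTS hg) f hfS
        calc g (f x) = (g ∘ f) x := rfl
          _ = (f ∘ g) x := by rw [hcomm]
          _ = f (g x) := rfl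
          _ = f x := by rw [hx.2 g hg]
      obtain ⟨p, hpD, hpf⟩ := fix_one hconv hcomp (hS f hfS).1 (hS f hfS).2
        hDTne (hDcl T hTS) (hDconv T hTS) hDTinv
      refine ⟨p, hpD.1, fun g hg => ?_⟩
      rcases Set.mem_insert_iff.mp hg with rfl | hg
      · exact hpf
      · exact hpD.2 g hg
  -- finite intersection property
  let ι := {T : Set (K → K) // T.Finite ∧ T ⊆ S}
  haveI : Nonempty ι := ⟨⟨∅, Set.finite_empty, Set.empty_subset S⟩⟩
  have hdir : Directed (· ⊇ ·) (fun i : ι => D i.1) := by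
    intro i j
    refine ⟨⟨i.1 ∪ j.1, i.2.1.union j.2.1, Set.union_subset i.2.2 j.2.2⟩, ?_, ?_⟩
    · exact fun x hx => ⟨hx.1, fun f hf => hx.2 f (Set.mem_union_left _ hf)⟩
    · exact fun x hx => ⟨hx.1, fun f hf => hx.2 f (Set.mem_union_right _ hf)⟩
  have hiter : (⋂ i : ι, D i.1).Nonempty :=
    IsCompact.nonempty_iInter_of_directed_nonempty_isCompact_isClosed _ hdir
      (fun i => key i.1 i.2.1 i.2.2)
      (fun i => (hDcl i.1 i.2.2).isCompact)
      (fun i => hDcl i.1 i.2.2)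
  obtain ⟨p, hp⟩ := hiter
  have hp' : ∀ i : ι, p ∈ D i.1 := fun i => Set.mem_iInter.mp hp i
  refine ⟨p, (hp' ⟨∅, Set.finite_empty, Set.empty_subset S⟩).1, fun f hf => ?_⟩
  exact (hp' ⟨{f}, Set.finite_singleton f, Set.singleton_subset_iff.mpr hf⟩).2 f rfl

end Aux

theorem stmt8 {X : Type*} [AddCommGroup X] [Module ℝ X] [TopologicalSpace X]
    [IsTopologicalAddGroup X] [ContinuousSMul ℝ X] [T2Space X] [LocallyConvexSpace ℝ X]
    (K : Set X) (hne : K.Nonempty) (hconv : Convex ℝ K) (hcomp : IsCompact K)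
    (H G : Set (K → K)) (hidH : id ∈ H) (hidG : id ∈ G)
    (hH : ∀ f ∈ H, Continuous f ∧ AffOn K f)
    (hG : ∀ f ∈ G, Continuous f ∧ AffOn K f)
    (hHclosed : ∀ f ∈ H, ∀ g ∈ H, f ∘ g ∈ H)
    (hGclosed : ∀ f ∈ G, ∀ g ∈ G, f ∘ g ∈ G)
    (hHabel : ∀ f ∈ H, ∀ g ∈ H, f ∘ g = g ∘ f)
    (hGabel : ∀ f ∈ G, ∀ g ∈ G, f ∘ g = g ∘ f)
    (hnormal : ∀ h ∈ H, ∀ g ∈ G, ∃ h' ∈ H, h ∘ g = g ∘ h') :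
    ∃ p : K, (∀ h ∈ H, h p = p) ∧ (∀ g ∈ G, g p = p) := by
  haveI : CompactSpace K := isCompact_iff_compactSpace.mp hcomp
  obtain ⟨x₀, hx₀⟩ := hne
  -- Step 1: common fixed points of H
  have step1 : ∃ p : K, p ∈ (Set.univ : Set K) ∧ ∀ f ∈ H, f p = p :=
    common_fix hconv hcomp ⟨⟨x₀, hx₀⟩, Set.mem_univ _⟩ isClosed_univ
      (fun _ _ _ _ _ _ _ h => Set.mem_univ _) hH hHabel
      (fun _ _ _ _ => Set.mem_univ _)
  set F : Set K := {x : K | ∀ f ∈ H, f x = x} with hF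
  have hFne : F.Nonempty := by
    obtain ⟨p, _, hp⟩ := step1
    exact ⟨p, hp⟩
  have hFcl : IsClosed F := by
    have : F = ⋂ f ∈ H, {x : K | f x = x} := by ext x; simp [hF]
    rw [this]
    exact isClosed_biInter fun f hf => isClosed_eq (hH f hf).1 continuous_id
  have hFconv : ConvK K F := by
    intro x hx y hy t ht0 ht1 h f hf
    apply Subtype.ext
    rw [(hH f hf).2 x y t ht0 ht1 h,
      show (f x : X) = (x : X) from congrArg _ (hx f hf),
      show (f y : X) = (y : X) from congrArg _ (hy f hf)]
  have hFinv : ∀ g ∈ G, ∀ x ∈ F, g x ∈ F := by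
    intro g hg x hx h hh
    obtain ⟨h', hh', heq⟩ := hnormal h hh g hg
    calc h (g x) = (h ∘ g) x := rfl
      _ = (g ∘ h') x := by rw [heq]
      _ = g (h' x) := rfl
      _ = g x := by rw [hx h' hh']
  obtain ⟨p, hpF, hpG⟩ := common_fix hconv hcomp hFne hFcl hFconv hG hGabel hFinv
  exact ⟨p, hpF, hpG⟩
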